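/- Let m, n be positive integers, q an odd positive integer dividing 4mn−1, and ξ a primitive q-th root of unity. For each j with 1 ≤ j ≤ q let a_j := ξ^{2j−1}, and define P_j(t) = c(a_j)·(t²+1) if a_j ≠ 1, where c(a) = a^{1+m−2mn}(δ_{m−1}(a)δ_{n−1}(a^{2m}))², and P_j(t) = (m²n²t⁴ + (2m²n² − 4mn + 1)t² + m²n²)/(t²+1) if a_j = 1. Then ∏_{j=1}^q P_j(t) = (t²+1)^{q−1} · (m²n²t⁴ + (2m²n² − 4mn + 1)t² + m²n²)/(t²+1), i.e., the product of the constants c(a_j) over j ≠ (q+1)/2 equals 1. -/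

import Mathlib

/-- δ_k(b) = 1 + b + ... + b^k -/
noncomputable def delta (k : ℕ) (b : ℂ) : ℂ := ∑ i ∈ Finset.range (k + 1), b ^ i

lemma delta_mul_sub_one (k : ℕ) (b : ℂ) : delta k b * (b - 1) = b ^ (k + 1) - 1 := by
  simpa [delta] using geom_sum_mul b (k + 1)

/-- reindexing a product over nonzero elements of `ZMod q` by a unit -/
lemma prodT_comp_unit {q : ℕ} [NeZero q] (u : ZMod q) (hu : IsUnit u) (g : ZMod q → ℂ) :
    ∏ x ∈ Finset.univ \ {(0 : ZMod q)}, g (u * x)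
      = ∏ x ∈ Finset.univ \ {(0 : ZMod q)}, g x := by
  obtain ⟨v, rfl⟩ := hu
  refine Finset.prod_nbij' (fun x => (v : ZMod q) * x) (fun y => ((v⁻¹ : (ZMod q)ˣ) : ZMod q) * y)
    ?_ ?_ ?_ ?_ ?_
  · intro a ha
    simp only [Finset.mem_sdiff, Finset.mem_univ, Finset.mem_singleton, true_and] at ha ⊢
    simpa [Units.mul_right_eq_zero] using ha
  · intro a ha
    simp only [Finset.mem_sdiff, Finset.mem_univ, Finset.mem_singleton, true_and] at ha ⊢
    simpa [Units.mul_right_eq_zero] using ha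
  · intro a _; simp [← mul_assoc, ← Units.val_mul]
  · intro a _; simp [← mul_assoc, ← Units.val_mul]
  · intro a _; rfl

theorem prod_twisted_alexander_factors (m n q : ℕ) (hm : 0 < m) (hn : 0 < n)
    (hq : Odd q) (hqd : q ∣ 4 * m * n - 1) (hqm : Nat.Coprime q m)
    (hqn : Nat.Coprime q n) (ξ : ℂ) (hξ : IsPrimitiveRoot ξ q) (t : ℝ) :
    (∏ j ∈ Finset.Icc 1 q,
        (if ξ ^ (2 * j - 1) = 1 then
          ((m : ℂ) ^ 2 * n ^ 2 * (t : ℂ) ^ 4 +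
              (2 * (m : ℂ) ^ 2 * n ^ 2 - 4 * m * n + 1) * (t : ℂ) ^ 2 +
              (m : ℂ) ^ 2 * n ^ 2) / ((t : ℂ) ^ 2 + 1)
        else
          (ξ ^ (2 * j - 1)) ^ (1 + (m : ℤ) - 2 * m * n) *
            (delta (m - 1) (ξ ^ (2 * j - 1)) *
              delta (n - 1) ((ξ ^ (2 * j - 1)) ^ (2 * m))) ^ 2 * ((t : ℂ) ^ 2 + 1)))
      = ((t : ℂ) ^ 2 + 1) ^ (q - 1) *
          (((m : ℂ) ^ 2 * n ^ 2 * (t : ℂ) ^ 4 +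
              (2 * (m : ℂ) ^ 2 * n ^ 2 - 4 * m * n + 1) * (t : ℂ) ^ 2 +
              (m : ℂ) ^ 2 * n ^ 2) / ((t : ℂ) ^ 2 + 1)) := by
  have hq0 : 0 < q := hq.pos
  haveI : NeZero q := ⟨hq0.ne'⟩
  have hξq : ξ ^ q = 1 := hξ.pow_eq_one
  set Q : ℂ := ((m : ℂ) ^ 2 * n ^ 2 * (t : ℂ) ^ 4 +
      (2 * (m : ℂ) ^ 2 * n ^ 2 - 4 * m * n + 1) * (t : ℂ) ^ 2 +
      (m : ℂ) ^ 2 * n ^ 2) / ((t : ℂ) ^ 2 + 1) with hQ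
  set e : ℤ := 1 + (m : ℤ) - 2 * m * n with he
  -- ξ^(val of cast) = ξ^y
  have hpow_nat : ∀ y : ℕ, ξ ^ ((y : ZMod q)).val = ξ ^ y := by
    intro y
    conv_rhs => rw [← Nat.div_add_mod y q]
    rw [pow_add, pow_mul, hξq, one_pow, one_mul, ZMod.val_natCast]
  have hval_one : ∀ x : ZMod q, (ξ ^ x.val = 1 ↔ x = 0) := by
    intro x
    constructor
    · intro h
      have hd := (hξ.pow_eq_one_iff_dvd _).mp h
      have := Nat.eq_zero_of_dvd_of_lt hd (ZMod.val_lt x)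
      exact (ZMod.val_eq_zero x).mp ((Nat.eq_zero_of_dvd_of_lt hd (ZMod.val_lt x)))
      -- handle q ∣ 0 case: if x.val = 0 then fine; Nat.eq_zero_of_dvd_of_lt needs 0 < x.val? check
    · rintro rfl; simp
  have key_cast : ∀ (a : ℕ) (x : ZMod q), ξ ^ (((a : ZMod q) * x).val) = (ξ ^ x.val) ^ a := by
    intro a x
    have hx : ((x.val : ℕ) : ZMod q) = x := ZMod.natCast_rightInverse x
    have : (a : ZMod q) * x = ((a * x.val : ℕ) : ZMod q) := by
      rw [Nat.cast_mul, hx]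
    rw [this, hpow_nat, mul_comm, pow_mul]
  have hu2 : IsUnit (2 : ZMod q) := by
    have : ((2 : ℕ) : ZMod q) = (2 : ZMod q) := by norm_cast
    rw [← this, ZMod.isUnit_iff_coprime]
    exact hq.coprime_two_left
  set T : Finset (ZMod q) := Finset.univ \ {(0 : ZMod q)} with hT
  set G : ZMod q → ℂ := fun x =>
    if ξ ^ x.val = 1 then Q
    else (ξ ^ x.val) ^ e *
      (delta (m - 1) (ξ ^ x.val) * delta (n - 1) ((ξ ^ x.val) ^ (2 * m))) ^ 2 *
      ((t : ℂ) ^ 2 + 1) with hG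
  -- Step 1: reindex
  have hinj : Set.InjOn (fun j => ((2 * j - 1 : ℕ) : ZMod q)) (Finset.Icc 1 q) := by
    intro j hj j' hj' hjj
    simp only [Finset.coe_Icc, Set.mem_Icc] at hj hj'
    have hmod : (2 * j - 1) ≡ (2 * j' - 1) [MOD q] := (ZMod.natCast_eq_natCast_iff _ _ _).mp hjj
    have hd : (q : ℤ) ∣ ((2 * j' - 1 : ℕ) : ℤ) - ((2 * j - 1 : ℕ) : ℤ) := hmod.dvd
    have h1 : ((2 * j - 1 : ℕ) : ℤ) = 2 * j - 1 := by
      have : 1 ≤ 2 * j := by omega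
      push_cast [this]; ring
    have h1' : ((2 * j' - 1 : ℕ) : ℤ) = 2 * j' - 1 := by
      have : 1 ≤ 2 * j' := by omega
      push_cast [this]; ring
    rw [h1, h1'] at hd
    have hd2 : (q : ℤ) ∣ 2 * ((j' : ℤ) - j) := by
      convert hd using 1; ring
    have hcop : IsCoprime (q : ℤ) (2 : ℤ) := by
      rw [show ((2:ℤ)) = ((2:ℕ):ℤ) by norm_cast, Nat.isCoprime_iff_coprime]
      exact hq.coprime_two_right
    have hd3 : (q : ℤ) ∣ ((j' : ℤ) - j) := hcop.dvd_of_dvd_mul_left hd2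
    have habs : |(j' : ℤ) - j| < q := by
      rw [abs_lt]; omega
    have := Int.eq_zero_of_abs_lt_dvd hd3 habs
    omega
  have himg : (Finset.Icc 1 q).image (fun j => ((2 * j - 1 : ℕ) : ZMod q)) = Finset.univ := by
    apply Finset.eq_univ_of_card
    rw [Finset.card_image_of_injOn hinj, Nat.card_Icc]
    simp [ZMod.card]
  have step1 : (∏ j ∈ Finset.Icc 1 q,
      (if ξ ^ (2 * j - 1) = 1 then Q
        else (ξ ^ (2 * j - 1)) ^ e *
          (delta (m - 1) (ξ ^ (2 * j - 1)) *
            delta (n - 1) ((ξ ^ (2 * j - 1)) ^ (2 * m))) ^ 2 * ((t : ℂ) ^ 2 + 1)))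
      = ∏ x ∈ Finset.univ, G x := by
    rw [← himg, Finset.prod_image (fun a ha b hb h => hinj ha hb h)]
    refine Finset.prod_congr rfl ?_
    intro j hj
    simp only [hG]
    rw [hpow_nat]
  -- Step 2: split off 0
  have hG0 : G 0 = Q := by simp [hG]
  have hsplit : ∏ x ∈ Finset.univ, G x = (∏ x ∈ T, G x) * Q := by
    rw [← Finset.prod_sdiff (Finset.subset_univ {(0 : ZMod q)}), ← hT,
      Finset.prod_singleton, hG0]
  -- on T, the if is false
  have hTne : ∀ x ∈ T, ξ ^ x.val ≠ 1 := by
    intro x hx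
    simp only [hT, Finset.mem_sdiff, Finset.mem_univ, Finset.mem_singleton, true_and] at hx
    exact fun h => hx ((hval_one x).mp h)
  have hTmem : ∀ x : ZMod q, x ∈ T ↔ x ≠ 0 := by
    intro x; simp [hT]
  have cardT : T.card = q - 1 := by
    rw [hT, Finset.card_sdiff_of_subset (Finset.subset_univ _), Finset.card_singleton,
      Finset.card_univ, ZMod.card]
  -- products over T
  have hstep3 : ∏ x ∈ T, G x =
      (∏ x ∈ T, (ξ ^ x.val) ^ e) *
      ((∏ x ∈ T, delta (m - 1) (ξ ^ x.val)) * ∏ x ∈ T, delta (n - 1) ((ξ ^ x.val) ^ (2 * m))) ^ 2 *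
      ((t : ℂ) ^ 2 + 1) ^ (q - 1) := by
    have hcong : ∀ x ∈ T, G x = (ξ ^ x.val) ^ e *
        (delta (m - 1) (ξ ^ x.val) * delta (n - 1) ((ξ ^ x.val) ^ (2 * m))) ^ 2 *
        ((t : ℂ) ^ 2 + 1) := by
      intro x hx
      simp only [hG]
      rw [if_neg (hTne x hx)]
    rw [Finset.prod_congr rfl hcong]
    rw [Finset.prod_mul_distrib, Finset.prod_mul_distrib, Finset.prod_pow,
      Finset.prod_mul_distrib, Finset.prod_const, cardT]
  -- the zpow product is 1
  have hzpow : ∏ x ∈ T, (ξ ^ x.val) ^ e = 1 := by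
    refine Finset.prod_involution (fun x _ => -x) ?_ ?_ ?_ ?_
    · intro a ha
      rw [← mul_zpow]
      have ha0 : a ≠ 0 := (hTmem a).mp ha
      have : ξ ^ a.val * ξ ^ (-a).val = 1 := by
        rw [← pow_add, ZMod.neg_val, if_neg ha0]
        have : a.val + (q - a.val) = q := by
          have := ZMod.val_lt a; omega
        rw [this, hξq]
      rw [this, one_zpow]
    · intro a ha _
      intro hcon
      have hcon' : -a = a := hcon
      have ha0 : a ≠ 0 := (hTmem a).mp ha
      have h2a : (2 : ZMod q) * a = 0 := by
        rw [two_mul]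
        nth_rewrite 1 [← hcon']
        exact neg_add_cancel a
      obtain ⟨v, hv⟩ := hu2
      exact ha0 ((Units.mul_right_eq_zero v).mp (by rw [hv]; exact h2a))
    · intro a ha
      rw [hTmem] at ha ⊢
      simpa using ha
    · intro a _; simp
  -- delta products are 1
  have hD : ∀ c : ℕ, Nat.Coprime c q →
      ∏ x ∈ T, ((ξ ^ x.val) ^ c - 1) = ∏ x ∈ T, (ξ ^ x.val - 1) := by
    intro c hc
    have hu : IsUnit ((c : ZMod q)) := (ZMod.isUnit_iff_coprime c q).mpr hc
    have := prodT_comp_unit (q := q) (c : ZMod q) hu (fun y => ξ ^ y.val - 1)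
    rw [← this]
    refine Finset.prod_congr rfl ?_
    intro x _
    rw [key_cast]
  have hDne : ∏ x ∈ T, (ξ ^ x.val - 1) ≠ 0 := by
    rw [Finset.prod_ne_zero_iff]
    intro a ha
    exact sub_ne_zero.mpr (hTne a ha)
  have hdm : ∏ x ∈ T, delta (m - 1) (ξ ^ x.val) = 1 := by
    have key : (∏ x ∈ T, delta (m - 1) (ξ ^ x.val)) * ∏ x ∈ T, (ξ ^ x.val - 1)
        = ∏ x ∈ T, (ξ ^ x.val - 1) := by
      rw [← Finset.prod_mul_distrib]
      calc ∏ x ∈ T, delta (m - 1) (ξ ^ x.val) * (ξ ^ x.val - 1)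
          = ∏ x ∈ T, ((ξ ^ x.val) ^ m - 1) := by
            refine Finset.prod_congr rfl fun x _ => ?_
            rw [delta_mul_sub_one, Nat.sub_add_cancel hm]
        _ = ∏ x ∈ T, (ξ ^ x.val - 1) := hD m hqm.symm
    exact mul_right_cancel₀ hDne (by rw [key, one_mul])
  have hdn : ∏ x ∈ T, delta (n - 1) ((ξ ^ x.val) ^ (2 * m)) = 1 := by
    have hc2m : Nat.Coprime (2 * m) q := Nat.Coprime.mul hq.coprime_two_left hqm.symm
    have hc2mn : Nat.Coprime (2 * m * n) q := Nat.Coprime.mul hc2m hqn.symm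
    have key : (∏ x ∈ T, delta (n - 1) ((ξ ^ x.val) ^ (2 * m))) * ∏ x ∈ T, (ξ ^ x.val - 1)
        = ∏ x ∈ T, (ξ ^ x.val - 1) := by
      conv_lhs => rw [← hD (2 * m) hc2m]
      rw [← Finset.prod_mul_distrib]
      calc ∏ x ∈ T, delta (n - 1) ((ξ ^ x.val) ^ (2 * m)) * ((ξ ^ x.val) ^ (2 * m) - 1)
          = ∏ x ∈ T, ((ξ ^ x.val) ^ (2 * m * n) - 1) := by
            refine Finset.prod_congr rfl fun x _ => ?_
            rw [delta_mul_sub_one, ← pow_mul, Nat.sub_add_cancel hn]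
        _ = ∏ x ∈ T, (ξ ^ x.val - 1) := hD (2 * m * n) hc2mn
    exact mul_right_cancel₀ hDne (by rw [key, one_mul])
  rw [step1, hsplit, hstep3, hzpow, hdm, hdn]
  ring
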